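/- Let ℓ ≥ 2, let p ≥ 1, let I_0, …, I_{p−1} be affine Euclidean isometries of ℝ^ℓ, and let F : ℤ_p × ℝ^ℓ → ℤ_p × ℝ^ℓ be the cylindrical vortex F(j, v) = (j + 1, I_j v) over the cyclic shift on ℤ_p = ℤ/pℤ. Then for every tube U ⊂ ℤ_p × ℝ^ℓ (an open bounded set all of whose fibers U_j are nonempty) there exists a B/P-M set K for F avoiding U: a closed set K ⊂ (ℤ_p × ℝ^ℓ) \ U such that for each j ∈ ℤ_p the fiber K_j ∪ {∞} is compact and connected in the one-point compactification of ℝ^ℓ, F(K) = F^{-1}(K) = K, and there exists j* ∈ ℤ_p with K_{j*} ∩ ∂U_{j*} ≠ ∅. -/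

import Mathlib

/-- `ℤ/pℤ` carries the discrete topology. -/
instance (p : ℕ) : TopologicalSpace (ZMod p) := ⊥

instance (p : ℕ) : DiscreteTopology (ZMod p) := ⟨rfl⟩

/-- `K` is a Birkhoff/Pérez-Marco set for the fibered map `F` on `Y × ℝ^ℓ` avoiding the
tube `U`: `K` is a closed set disjoint from `U`, each fiber `K_y ∪ {∞}` is compact and
connected in the one-point compactification of `ℝ^ℓ`, `K` is completely invariant under
`F`, and some fiber of `K` touches the boundary of the corresponding fiber of `U`. -/
def IsFiberedBPMSet {Y : Type*} [TopologicalSpace Y] {ℓ : ℕ}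
    (F : Equiv.Perm (Y × EuclideanSpace ℝ (Fin ℓ)))
    (U K : Set (Y × EuclideanSpace ℝ (Fin ℓ))) : Prop :=
  IsClosed K ∧
  K ⊆ Uᶜ ∧
  (∀ y : Y, IsCompact (OnePoint.some '' {v | (y, v) ∈ K} ∪ {OnePoint.infty}) ∧
    IsConnected (OnePoint.some '' {v | (y, v) ∈ K} ∪ {OnePoint.infty})) ∧
  ⇑F '' K = K ∧ ⇑F ⁻¹' K = K ∧
  ∃ y : Y, ({v | (y, v) ∈ K} ∩ frontier {v | (y, v) ∈ U}).Nonempty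

/-! ### Auxiliary lemmas on the one-point compactification -/

section OnePointAux

open Set Bornology OnePoint

lemma bpm_onePoint_closed {X : Type*} [TopologicalSpace X] {C : Set X} (hC : IsClosed C) :
    IsClosed (OnePoint.some '' C ∪ {OnePoint.infty} : Set (OnePoint X)) := by
  have h : (OnePoint.some '' C ∪ {OnePoint.infty} : Set (OnePoint X)) = (OnePoint.some '' Cᶜ)ᶜ := by
    rw [OnePoint.compl_image_coe, compl_compl]
  rw [h, isClosed_compl_iff]
  exact OnePoint.isOpenMap_coe _ hC.isOpen_compl

lemma bpm_onePoint_compact {X : Type*} [TopologicalSpace X] {C : Set X} (hC : IsClosed C) :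
    IsCompact (OnePoint.some '' C ∪ {OnePoint.infty} : Set (OnePoint X)) :=
  (bpm_onePoint_closed hC).isCompact

private lemma bpm_key_aux {X : Type*} [MetricSpace X] {C : Set X} (hC : IsClosed C)
    (h : ∀ x ∈ C, ∃ S : Set X, S ⊆ C ∧ x ∈ S ∧ IsConnected S ∧ ¬ IsBounded S)
    {u v : Set (OnePoint X)} (hu : IsOpen u) (hv : IsOpen v)
    (hsub : (OnePoint.some '' C ∪ {OnePoint.infty}) ⊆ u ∪ v)
    (hiu : OnePoint.infty ∈ u)
    {b : OnePoint X} (hbD : b ∈ OnePoint.some '' C ∪ {OnePoint.infty}) (hbv : b ∈ v)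
    (hne : (OnePoint.some '' C ∪ {OnePoint.infty}) ∩ (u ∩ v) = ∅) : False := by
  set D : Set (OnePoint X) := OnePoint.some '' C ∪ {OnePoint.infty} with hD
  have hDclosed : IsClosed D := bpm_onePoint_closed hC
  have hdis : ∀ x ∈ D, x ∈ u → x ∉ v := by
    intro x hx hxu hxv
    exact absurd (hne ▸ (⟨hx, hxu, hxv⟩ : x ∈ D ∩ (u ∩ v))) (Set.notMem_empty x)
  have hA : IsCompact (D \ u) := (hDclosed.sdiff hu).isCompact
  have hiA : OnePoint.infty ∉ D \ u := fun hx => hx.2 hiu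
  have hArange : D \ u ⊆ Set.range (OnePoint.some : X → OnePoint X) := by
    intro x hx
    cases x with
    | infty => exact absurd hx hiA
    | coe y => exact ⟨y, rfl⟩
  have hbne : b ≠ OnePoint.infty := by
    rintro rfl; exact hdis _ hbD hiu hbv
  obtain ⟨x₀, hx₀C, rfl⟩ : ∃ x₀ ∈ C, OnePoint.some x₀ = b := by
    rcases hbD with h1 | h1
    · obtain ⟨x₀, hx, rfl⟩ := h1; exact ⟨x₀, hx, rfl⟩
    · exact absurd h1 hbne
  obtain ⟨S, hSC, hx₀S, hScon, hSunb⟩ := h x₀ hx₀C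
  have hSD : OnePoint.some '' S ⊆ D := fun z hz =>
    Or.inl (Set.image_mono hSC hz)
  by_cases hmeet : (OnePoint.some '' S ∩ u).Nonempty
  · obtain ⟨z, hzS, hzuv⟩ := (hScon.image _ OnePoint.continuous_coe.continuousOn).isPreconnected
      u v hu hv (hSD.trans hsub) hmeet ⟨OnePoint.some x₀, ⟨x₀, hx₀S, rfl⟩, hbv⟩
    exact hdis z (hSD hzS) hzuv.1 hzuv.2
  · have hSsub : OnePoint.some '' S ⊆ D \ u := fun z hz =>
      ⟨hSD hz, fun hzu => hmeet ⟨z, hz, hzu⟩⟩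
    have hpre : IsCompact (OnePoint.some ⁻¹' (D \ u) : Set X) :=
      (OnePoint.isOpenEmbedding_coe.isInducing.isCompact_preimage_iff hArange).2 hA
    have : S ⊆ OnePoint.some ⁻¹' (D \ u) := fun x hx => hSsub ⟨x, hx, rfl⟩
    exact hSunb (hpre.isBounded.subset this)

/-- If every point of a closed set `C` lies in an unbounded connected subset of `C`, then
`C ∪ {∞}` is connected in the one-point compactification. -/
lemma bpm_onePoint_connected {X : Type*} [MetricSpace X] {C : Set X} (hC : IsClosed C)
    (h : ∀ x ∈ C, ∃ S : Set X, S ⊆ C ∧ x ∈ S ∧ IsConnected S ∧ ¬ IsBounded S) :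
    IsConnected (OnePoint.some '' C ∪ {OnePoint.infty} : Set (OnePoint X)) := by
  refine ⟨⟨OnePoint.infty, Or.inr rfl⟩, ?_⟩
  rintro u v hu hv hsub ⟨a, haD, hau⟩ ⟨b, hbD, hbv⟩
  by_contra hne
  rw [Set.not_nonempty_iff_eq_empty] at hne
  have hi : OnePoint.infty ∈ u ∪ v := hsub (Or.inr rfl)
  rcases hi with hiu | hiv
  · exact bpm_key_aux hC h hu hv hsub hiu hbD hbv hne
  · refine bpm_key_aux hC h hv hu (hsub.trans (Set.union_comm u v).subset) hiv haD hau ?_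
    rw [Set.inter_comm u v] at hne; exact hne

end OnePointAux

/-! ### Auxiliary lemmas on isometries and the distance to an invariant line -/

section Core

open Set Bornology Submodule

set_option linter.unusedSectionVars false

variable {E : Type*} [NormedAddCommGroup E] [InnerProductSpace ℝ E] [FiniteDimensional ℝ E]

local notation "⟪" x ", " y "⟫" => inner (𝕜 := ℝ) x y

variable (ρ₀ c : E)

/-- distance-like function to the invariant line `c + ℝ∙ρ₀`. -/
noncomputable def bpmFdist (v : E) : ℝ :=
  ‖(v - c) - (orthogonalProjection (ℝ ∙ ρ₀) (v - c) : E)‖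

lemma bpmFdist_nonneg (v : E) : 0 ≤ bpmFdist ρ₀ c v := norm_nonneg _

lemma bpmFdist_continuous : Continuous (bpmFdist ρ₀ c) := by
  have h1 : Continuous fun v : E => v - c := continuous_id.sub continuous_const
  have h2 : Continuous fun v : E => ((orthogonalProjection (ℝ ∙ ρ₀) (v - c)) : E) :=
    continuous_subtype_val.comp ((orthogonalProjection (ℝ ∙ ρ₀)).continuous.comp h1)
  exact (h1.sub h2).norm

variable {ρ₀}

lemma bpm_span_fix {Ψ : E ≃ₗᵢ[ℝ] E} (hρ₀ : Ψ ρ₀ = ρ₀) {y : E} (hy : y ∈ ℝ ∙ ρ₀) : Ψ y = y := by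
  obtain ⟨t, rfl⟩ := mem_span_singleton.1 hy
  rw [map_smul, hρ₀]

lemma bpm_proj_psi {Ψ : E ≃ₗᵢ[ℝ] E} (hρ₀ : Ψ ρ₀ = ρ₀) (z : E) :
    (orthogonalProjection (ℝ ∙ ρ₀) (Ψ z) : E) = orthogonalProjection (ℝ ∙ ρ₀) z := by
  refine eq_starProjection_of_mem_of_inner_eq_zero (K := ℝ ∙ ρ₀) (u := Ψ z) (coe_mem _) fun w hw => ?_
  have h1 : ⟪w, z - (orthogonalProjection (ℝ ∙ ρ₀) z : E)⟫ = 0 :=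
    (sub_starProjection_mem_orthogonal (K := ℝ ∙ ρ₀) z) w hw
  have h2 : Ψ w = w := bpm_span_fix hρ₀ hw
  have h3 : ⟪Ψ z, w⟫ = ⟪z, w⟫ := by
    conv_lhs => rw [← h2]
    exact Ψ.inner_map_map z w
  rw [inner_sub_left, h3, ← inner_sub_left, real_inner_comm]
  exact h1

lemma bpmFdist_invariant {Ψ : E ≃ₗᵢ[ℝ] E} (hρ₀ : Ψ ρ₀ = ρ₀) (v : E) :
    bpmFdist ρ₀ c (Ψ (v - c) + ρ₀ + c) = bpmFdist ρ₀ c v := by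
  unfold bpmFdist
  have h1 : Ψ (v - c) + ρ₀ + c - c = Ψ (v - c) + ρ₀ := by abel
  rw [h1]
  have hρmem : ρ₀ ∈ ℝ ∙ ρ₀ := mem_span_singleton_self _
  have h2 : (orthogonalProjection (ℝ ∙ ρ₀) (Ψ (v - c) + ρ₀) : E)
      = (orthogonalProjection (ℝ ∙ ρ₀) (v - c) : E) + ρ₀ := by
    rw [map_add]
    push_cast
    rw [bpm_proj_psi hρ₀, (show (orthogonalProjection (ℝ ∙ ρ₀) ρ₀ : E) = ρ₀ from starProjection_eq_self_iff.2 hρmem)]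
  rw [h2]
  have h3 : Ψ (v - c) + ρ₀ - ((orthogonalProjection (ℝ ∙ ρ₀) (v - c) : E) + ρ₀)
      = Ψ (v - c) - Ψ (orthogonalProjection (ℝ ∙ ρ₀) (v - c) : E) := by
    rw [bpm_span_fix hρ₀ (coe_mem _)]; abel
  rw [h3, ← map_sub, Ψ.norm_map]

lemma bpm_proj_of_orthogonal {e : E} (he : e ∈ (ℝ ∙ ρ₀)ᗮ) :
    (orthogonalProjection (ℝ ∙ ρ₀) e : E) = 0 :=
  congrArg _ (orthogonalProjection_mem_subspace_orthogonalComplement_eq_zero he)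

/-- moving along the outward ray scales `bpmFdist`. -/
lemma bpmFdist_ray (v : E) {t : ℝ} (ht : 0 ≤ t) :
    bpmFdist ρ₀ c (v + t • ((v - c) - (orthogonalProjection (ℝ ∙ ρ₀) (v - c) : E)))
      = (1 + t) * bpmFdist ρ₀ c v := by
  set z := v - c with hz
  set q := z - (orthogonalProjection (ℝ ∙ ρ₀) z : E) with hq
  have hqmem : q ∈ (ℝ ∙ ρ₀)ᗮ := sub_starProjection_mem_orthogonal (K := ℝ ∙ ρ₀) z
  have h1 : v + t • q - c = z + t • q := by rw [hz]; abel
  unfold bpmFdist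
  rw [h1]
  have h2 : (orthogonalProjection (ℝ ∙ ρ₀) (z + t • q) : E)
      = (orthogonalProjection (ℝ ∙ ρ₀) z : E) := by
    rw [map_add, map_smul]
    push_cast
    rw [bpm_proj_of_orthogonal hqmem, smul_zero, add_zero]
  rw [h2]
  have h3 : z + t • q - (orthogonalProjection (ℝ ∙ ρ₀) z : E) = (1 + t) • q := by
    rw [add_smul, one_smul, hq]; abel
  rw [h3, norm_smul, Real.norm_eq_abs, abs_of_nonneg (by linarith)]

/-- perturbation: `bpmFdist` can always be strictly increased nearby. -/
lemma bpmFdist_perturb (he : ∃ e : E, e ≠ 0 ∧ e ∈ (ℝ ∙ ρ₀)ᗮ) (v : E) {δ : ℝ} (hδ : 0 < δ) :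
    ∃ v' : E, dist v' v ≤ δ ∧ bpmFdist ρ₀ c v < bpmFdist ρ₀ c v' := by
  set q := (v - c) - (orthogonalProjection (ℝ ∙ ρ₀) (v - c) : E) with hq
  by_cases hqz : q = 0
  · obtain ⟨e, he0, heo⟩ := he
    refine ⟨v + (δ / ‖e‖) • e, ?_, ?_⟩
    · rw [dist_eq_norm, add_sub_cancel_left, norm_smul, Real.norm_eq_abs,
        abs_of_nonneg (le_of_lt (div_pos hδ (norm_pos_iff.2 he0)))]
      rw [div_mul_cancel₀ _ (norm_ne_zero_iff.2 he0)]
    · have hv : bpmFdist ρ₀ c v = 0 := by rw [bpmFdist, ← hq, hqz, norm_zero]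
      rw [hv, bpmFdist]
      have h1 : v + (δ / ‖e‖) • e - c = (v - c) + (δ / ‖e‖) • e := by abel
      have h2 : (orthogonalProjection (ℝ ∙ ρ₀) ((v - c) + (δ / ‖e‖) • e) : E)
          = (orthogonalProjection (ℝ ∙ ρ₀) (v - c) : E) := by
        rw [map_add, map_smul]
        push_cast
        rw [bpm_proj_of_orthogonal heo, smul_zero, add_zero]
      rw [h1, h2]
      have h3 : v - c + (δ / ‖e‖) • e - (orthogonalProjection (ℝ ∙ ρ₀) (v - c) : E)
          = q + (δ / ‖e‖) • e := by rw [hq]; abel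
      rw [h3, hqz, zero_add, norm_smul, Real.norm_eq_abs,
        abs_of_nonneg (le_of_lt (div_pos hδ (norm_pos_iff.2 he0))),
        div_mul_cancel₀ _ (norm_ne_zero_iff.2 he0)]
      exact hδ
  · have hqpos : 0 < ‖q‖ := norm_pos_iff.2 hqz
    have hfv : bpmFdist ρ₀ c v = ‖q‖ := rfl
    set t := δ / ‖q‖ with htdef
    have ht : 0 < t := div_pos hδ hqpos
    refine ⟨v + t • q, ?_, ?_⟩
    · rw [dist_eq_norm, add_sub_cancel_left, norm_smul, Real.norm_eq_abs,
        abs_of_nonneg ht.le, htdef, div_mul_cancel₀ _ (ne_of_gt hqpos)]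
    · rw [hq] at *
      rw [bpmFdist_ray c v ht.le, hfv]
      nlinarith [hqpos]

lemma bpm_orth_range_fix (Ψ : E ≃ₗᵢ[ℝ] E) {x : E}
    (hx : x ∈ (LinearMap.range (Ψ.toLinearEquiv.toLinearMap - LinearMap.id))ᗮ) : Ψ x = x := by
  have h1 : ⟪Ψ x - x, x⟫ = 0 := hx _ ⟨x, rfl⟩
  have h3 : ⟪Ψ x, x⟫ = ⟪x, x⟫ := by rw [inner_sub_left] at h1; linarith
  have h2 : ⟪Ψ x - x, Ψ x - x⟫ = 0 := by
    rw [inner_sub_left, inner_sub_right, inner_sub_right, Ψ.inner_map_map]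
    have h4 : ⟪x, Ψ x⟫ = ⟪Ψ x, x⟫ := real_inner_comm _ _
    linarith
  exact sub_eq_zero.1 (inner_self_eq_zero.1 h2)

/-- Affine decomposition of a surjective isometry: an invariant vector `ρ₀` for the
linear part and a base point `c` such that `T v = Ψ (v - c) + ρ₀ + c`. -/
lemma bpm_isometry_decomp (T : E ≃ᵢ E) :
    ∃ (Ψ : E ≃ₗᵢ[ℝ] E) (ρ₀ c : E), Ψ ρ₀ = ρ₀ ∧ ∀ v, T v = Ψ (v - c) + ρ₀ + c := by
  set Ψ := T.toRealLinearIsometryEquiv with hΨ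
  have hTv : ∀ v, T v = Ψ v + T 0 := by
    intro v
    rw [hΨ, T.toRealLinearIsometryEquiv_apply]
    abel
  set R := LinearMap.range (Ψ.toLinearEquiv.toLinearMap - LinearMap.id) with hR
  set m : E := (orthogonalProjection R (T 0) : E) with hm
  have hmem : (T 0) - m ∈ Rᗮ := sub_starProjection_mem_orthogonal (K := R) (T 0)
  obtain ⟨w, hw⟩ : ∃ w, Ψ w - w = m := by
    have := coe_mem (orthogonalProjection R (T 0))
    rw [← hm] at this
    obtain ⟨w, hw⟩ := this
    exact ⟨w, by simpa [LinearMap.sub_apply] using hw⟩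
  refine ⟨Ψ, T 0 - m, -w, bpm_orth_range_fix Ψ hmem, fun v => ?_⟩
  rw [hTv v, map_sub, map_neg]
  rw [sub_eq_iff_eq_add] at hw
  rw [hw]
  abel

lemma bpm_exists_orthogonal (hl : 2 ≤ Module.finrank ℝ E) (ρ₀ : E) :
    ∃ e : E, e ≠ 0 ∧ e ∈ (ℝ ∙ ρ₀)ᗮ := by
  by_contra hcon
  push_neg at hcon
  have hbot : (ℝ ∙ ρ₀)ᗮ = ⊥ := by
    rw [Submodule.eq_bot_iff]
    intro x hx
    by_contra hx0
    exact absurd hx (hcon x hx0)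
  have htop : (ℝ ∙ ρ₀) = ⊤ := Submodule.orthogonal_eq_bot_iff.1 hbot
  rcases eq_or_ne ρ₀ 0 with rfl | hne
  · rw [Submodule.span_zero_singleton] at htop
    have h2 : Module.finrank ℝ E = 0 := by
      rw [← finrank_top ℝ E, ← htop, finrank_bot]
    omega
  · have h2 : Module.finrank ℝ E = 1 := by
      rw [← finrank_top ℝ E, ← htop, finrank_span_singleton hne]
    omega

end Core

/-! ### Iterated compositions of the fiber isometries -/

/-- Composition `J (n-1) ∘ ⋯ ∘ J 0` of isometries. -/
noncomputable def bpmCyl {X : Type*} [PseudoEMetricSpace X] (J : ℕ → (X ≃ᵢ X)) : ℕ → (X ≃ᵢ X)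
  | 0 => IsometryEquiv.refl X
  | n + 1 => (bpmCyl J n).trans (J n)

lemma bpmCyl_succ_apply {X : Type*} [PseudoEMetricSpace X] (J : ℕ → (X ≃ᵢ X)) (n : ℕ) (v : X) :
    bpmCyl J (n + 1) v = J n (bpmCyl J n v) := rfl

/-- For the cylindrical vortex `F(j,v) = (j+1, I_j v)` over the cyclic shift on `ℤ/pℤ`
(given by affine Euclidean isometries `I_j` of `ℝ^ℓ`, `ℓ ≥ 2`), every tube `U` admits a
B/P-M set avoiding it. -/
theorem exists_fibered_bpm_set_over_cyclic {ℓ : ℕ} (hℓ : 2 ≤ ℓ) (p : ℕ) (hp : 1 ≤ p)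
    (I : ZMod p → (EuclideanSpace ℝ (Fin ℓ) ≃ᵢ EuclideanSpace ℝ (Fin ℓ)))
    (F : Equiv.Perm (ZMod p × EuclideanSpace ℝ (Fin ℓ)))
    (hF : ∀ (j : ZMod p) (v : EuclideanSpace ℝ (Fin ℓ)), F (j, v) = (j + 1, I j v))
    (U : Set (ZMod p × EuclideanSpace ℝ (Fin ℓ)))
    (hUopen : IsOpen U) (hUbdd : Bornology.IsBounded (Prod.snd '' U))
    (hUfibers : ∀ j : ZMod p, {v | (j, v) ∈ U}.Nonempty) :
    ∃ K : Set (ZMod p × EuclideanSpace ℝ (Fin ℓ)), IsFiberedBPMSet F U K := by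
  classical
  haveI : NeZero p := ⟨by omega⟩
  set J : ℕ → (EuclideanSpace ℝ (Fin ℓ) ≃ᵢ EuclideanSpace ℝ (Fin ℓ)) :=
    fun n => I (n : ZMod p) with hJ
  set T : EuclideanSpace ℝ (Fin ℓ) ≃ᵢ EuclideanSpace ℝ (Fin ℓ) := bpmCyl J p with hTdef
  obtain ⟨Ψ, ρ₀, c, hρ₀, hT⟩ := bpm_isometry_decomp T
  have hrank : 2 ≤ Module.finrank ℝ (EuclideanSpace ℝ (Fin ℓ)) := by
    simpa [finrank_euclideanSpace] using hℓ
  have he := bpm_exists_orthogonal hrank ρ₀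
  set f : EuclideanSpace ℝ (Fin ℓ) → ℝ := bpmFdist ρ₀ c with hf
  have hfT : ∀ v, f (T v) = f v := fun v => by rw [hf, hT v]; exact bpmFdist_invariant c hρ₀ v
  set G : ZMod p → (EuclideanSpace ℝ (Fin ℓ) ≃ᵢ EuclideanSpace ℝ (Fin ℓ)) :=
    fun j => bpmCyl J j.val with hG
  -- the step relation between consecutive fibers
  have hstep : ∀ j : ZMod p,
      (∀ v, I j (G j v) = G (j + 1) v) ∨ (∀ v, I j (G j v) = G (j + 1) (T v)) := by
    intro j
    have hjlt : j.val < p := ZMod.val_lt j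
    have hcast : ((j.val : ℕ) : ZMod p) = j := ZMod.natCast_rightInverse j
    have hGstep : ∀ v, I j (G j v) = bpmCyl J (j.val + 1) v := by
      intro v
      show I j (bpmCyl J j.val v) = I ((j.val : ℕ) : ZMod p) (bpmCyl J j.val v)
      rw [hcast]
    by_cases hcase : j.val + 1 < p
    · left
      intro v
      have h1 : (j + 1).val = j.val + 1 := by
        have heq : j + 1 = ((j.val + 1 : ℕ) : ZMod p) := by
          push_cast
          rw [hcast]
        rw [heq, ZMod.val_natCast, Nat.mod_eq_of_lt hcase]
      rw [hGstep v]
      show bpmCyl J (j.val + 1) v = bpmCyl J ((j + 1).val) v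
      rw [h1]
    · right
      intro v
      have hp1 : j.val + 1 = p := by omega
      have h1 : j + 1 = 0 := by
        have heq : j + 1 = ((j.val + 1 : ℕ) : ZMod p) := by
          push_cast
          rw [hcast]
        rw [heq, hp1, ZMod.natCast_self]
      rw [hGstep v, h1]
      show bpmCyl J (j.val + 1) v = bpmCyl J ((0 : ZMod p).val) (T v)
      rw [ZMod.val_zero, hp1, hTdef]
      rfl
  -- the fiberwise invariant functions
  set fj : ZMod p → EuclideanSpace ℝ (Fin ℓ) → ℝ := fun j v => f ((G j).symm v) with hfj
  have hfjF : ∀ (j : ZMod p) (v : EuclideanSpace ℝ (Fin ℓ)), fj (j + 1) (I j v) = fj j v := by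
    intro j v
    rcases hstep j with h | h
    · have h2 := h ((G j).symm v)
      rw [(G j).apply_symm_apply] at h2
      show f ((G (j + 1)).symm (I j v)) = f ((G j).symm v)
      rw [h2, (G (j + 1)).symm_apply_apply]
    · have h2 := h ((G j).symm v)
      rw [(G j).apply_symm_apply] at h2
      show f ((G (j + 1)).symm (I j v)) = f ((G j).symm v)
      rw [h2, (G (j + 1)).symm_apply_apply]
      exact hfT _
  have hfjcont : ∀ j : ZMod p, Continuous (fj j) := fun j =>
    (bpmFdist_continuous ρ₀ c).comp (G j).symm.continuous
  have hfjnonneg : ∀ j v, 0 ≤ fj j v := fun j v => bpmFdist_nonneg ρ₀ c _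
  -- fibers of the tube
  set Uf : ZMod p → Set (EuclideanSpace ℝ (Fin ℓ)) := fun j => {v | (j, v) ∈ U} with hUf
  have hUfopen : ∀ j, IsOpen (Uf j) := fun j => hUopen.preimage (Continuous.prodMk_right j)
  have hUfbdd : ∀ j, Bornology.IsBounded (Uf j) := fun j =>
    hUbdd.subset (fun v hv => ⟨(j, v), hv, rfl⟩)
  have hbddA : ∀ j, BddAbove (fj j '' Uf j) := by
    intro j
    have hcl : IsCompact (closure (Uf j)) := (hUfbdd j).isCompact_closure
    have h2 : IsCompact (fj j '' closure (Uf j)) := hcl.image (hfjcont j)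
    exact h2.bddAbove.mono (Set.image_mono subset_closure)
  set sj : ZMod p → ℝ := fun j => sSup (fj j '' Uf j) with hsj
  have hle : ∀ (j : ZMod p), ∀ v ∈ Uf j, fj j v ≤ sj j := fun j v hv =>
    le_csSup (hbddA j) ⟨v, hv, rfl⟩
  have hne : (Finset.univ : Finset (ZMod p)).Nonempty := Finset.univ_nonempty
  set s : ℝ := Finset.univ.sup' hne sj with hs
  have hsj_le : ∀ j, sj j ≤ s := fun j => Finset.le_sup' sj (Finset.mem_univ j)
  obtain ⟨jstar, _, hjstar⟩ := Finset.exists_mem_eq_sup' hne sj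
  have hseq : s = sj jstar := hjstar
  -- perturbation within a fiber of the tube
  have hper : ∀ (j : ZMod p), ∀ v ∈ Uf j, ∃ v' ∈ Uf j, fj j v < fj j v' := by
    intro j v hv
    obtain ⟨ε, hε, hball⟩ := Metric.isOpen_iff.1 (hUfopen j) v hv
    obtain ⟨u', hu'dist, hu'lt⟩ := bpmFdist_perturb c he ((G j).symm v) (half_pos hε)
    refine ⟨G j u', hball ?_, ?_⟩
    · rw [Metric.mem_ball]
      have hd : dist (G j u') v = dist u' ((G j).symm v) := by
        conv_lhs => rw [← (G j).apply_symm_apply v]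
        exact (G j).isometry.dist_eq _ _
      rw [hd]
      linarith
    · show f ((G j).symm v) < f ((G j).symm (G j u'))
      rw [(G j).symm_apply_apply]
      exact hu'lt
  -- positivity and strictness
  have hsj_pos : ∀ j, 0 < sj j := by
    intro j
    obtain ⟨v, hv⟩ := hUfibers j
    obtain ⟨v', hv', hlt⟩ := hper j v hv
    exact lt_of_le_of_lt (hfjnonneg j v) (lt_of_lt_of_le hlt (hle j v' hv'))
  have hs_pos : 0 < s := by rw [hseq]; exact hsj_pos jstar
  have hstrict : ∀ (j : ZMod p), ∀ v ∈ Uf j, fj j v < s := by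
    intro j v hv
    obtain ⟨v', hv', hlt⟩ := hper j v hv
    exact lt_of_lt_of_le hlt ((hle j v' hv').trans (hsj_le j))
  -- the B/P-M set
  set K : Set (ZMod p × EuclideanSpace ℝ (Fin ℓ)) := {x | s ≤ fj x.1 x.2} with hK
  have hKfib : ∀ j : ZMod p, {v | (j, v) ∈ K} = (fj j) ⁻¹' (Set.Ici s) := fun j => rfl
  have hKfibcl : ∀ j : ZMod p, IsClosed ((fj j) ⁻¹' (Set.Ici s)) := fun j =>
    IsClosed.preimage (hfjcont j) isClosed_Ici
  refine ⟨K, ?_, ?_, ?_, ?_, ?_, ?_⟩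
  · -- closed
    have hKeq : K = ⋃ j : ZMod p, ({j} : Set (ZMod p)) ×ˢ ((fj j) ⁻¹' (Set.Ici s)) := by
      ext ⟨j, v⟩
      simp only [Set.mem_iUnion, Set.mem_prod, Set.mem_singleton_iff, Set.mem_preimage,
        Set.mem_Ici, hK, Set.mem_setOf_eq]
      constructor
      · intro h; exact ⟨j, rfl, h⟩
      · rintro ⟨j', rfl, h⟩; exact h
    rw [hKeq]
    exact isClosed_iUnion_of_finite fun j => isClosed_singleton.prod (hKfibcl j)
  · -- avoids the tube
    rintro ⟨j, v⟩ hxK hxU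
    exact absurd hxK (not_le.2 (hstrict j v hxU))
  · -- fibers are compact and connected at infinity
    intro j
    rw [hKfib j]
    refine ⟨bpm_onePoint_compact (hKfibcl j), bpm_onePoint_connected (hKfibcl j) ?_⟩
    intro x hx
    rw [Set.mem_preimage, Set.mem_Ici] at hx
    set u : EuclideanSpace ℝ (Fin ℓ) := (G j).symm x with hu
    set q : EuclideanSpace ℝ (Fin ℓ) :=
      (u - c) - (Submodule.orthogonalProjection (ℝ ∙ ρ₀) (u - c) : EuclideanSpace ℝ (Fin ℓ)) with hq
    have hfu : f u = ‖q‖ := rfl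
    have hfux : fj j x = f u := rfl
    have hqpos : 0 < ‖q‖ := by rw [← hfu, ← hfux]; exact lt_of_lt_of_le hs_pos hx
    have hxfu : s ≤ f u := by rw [← hfux]; exact hx
    have hray : ∀ t : ℝ, 0 ≤ t → f (u + t • q) = (1 + t) * f u := by
      intro t ht
      rw [hf, hq]
      exact bpmFdist_ray c u ht
    refine ⟨(fun t : ℝ => G j (u + t • q)) '' (Set.Ici 0), ?_, ?_, ?_, ?_⟩
    · rintro _ ⟨t, (ht : (0:ℝ) ≤ t), rfl⟩
      rw [Set.mem_preimage, Set.mem_Ici]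
      show s ≤ f ((G j).symm (G j (u + t • q)))
      rw [(G j).symm_apply_apply, hray t ht]
      nlinarith [hxfu, hs_pos, ht]
    · refine ⟨0, Set.self_mem_Ici, ?_⟩
      show G j (u + (0:ℝ) • q) = x
      rw [zero_smul, add_zero, hu, (G j).apply_symm_apply]
    · exact (isConnected_Ici).image _
        ((G j).continuous.comp
          (continuous_const.add (continuous_id.smul continuous_const))).continuousOn
    · -- unbounded
      intro hbdd
      rw [Metric.isBounded_iff] at hbdd
      obtain ⟨C0, hC0⟩ := hbdd
      set t : ℝ := (C0 + 1) / ‖q‖ with ht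
      have hmem0 : G j (u + (0:ℝ) • q) ∈ (fun t : ℝ => G j (u + t • q)) '' (Set.Ici 0) :=
        ⟨0, Set.self_mem_Ici, rfl⟩
      have hC0nonneg : 0 ≤ C0 := by
        have := hC0 hmem0 hmem0
        simpa using this
      have htpos : 0 ≤ t := div_nonneg (by linarith) hqpos.le
      have hmemt : G j (u + t • q) ∈ (fun t : ℝ => G j (u + t • q)) '' (Set.Ici 0) :=
        ⟨t, htpos, rfl⟩
      have hdist := hC0 hmemt hmem0
      rw [(G j).isometry.dist_eq, dist_eq_norm] at hdist
      have heqn : u + t • q - (u + (0:ℝ) • q) = t • q := by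
        rw [zero_smul, add_zero]; abel
      rw [heqn, norm_smul, Real.norm_eq_abs, abs_of_nonneg htpos, ht,
        div_mul_cancel₀ _ (ne_of_gt hqpos)] at hdist
      linarith
  · -- forward invariance
    have hpre : ⇑F ⁻¹' K = K := by
      ext x
      obtain ⟨j, v⟩ := x
      rw [Set.mem_preimage, hF j v]
      show s ≤ fj (j + 1) (I j v) ↔ s ≤ fj j v
      rw [hfjF j v]
    conv_lhs => rw [← hpre]
    exact F.image_preimage K
  · -- backward invariance
    ext x
    obtain ⟨j, v⟩ := x
    rw [Set.mem_preimage, hF j v]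
    show s ≤ fj (j + 1) (I j v) ↔ s ≤ fj j v
    rw [hfjF j v]
  · -- touching the boundary of the tube
    have hclcomp : IsCompact (closure (Uf jstar)) := (hUfbdd jstar).isCompact_closure
    have hclne : (closure (Uf jstar)).Nonempty := Set.Nonempty.closure (hUfibers jstar)
    obtain ⟨vstar, hvcl, hvmax⟩ :=
      hclcomp.exists_isMaxOn hclne (hfjcont jstar).continuousOn
    have hub : sj jstar ≤ fj jstar vstar := by
      refine csSup_le (Set.Nonempty.image _ (hUfibers jstar)) ?_
      rintro _ ⟨v, hv, rfl⟩
      exact hvmax (subset_closure hv)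
    have hvnotU : vstar ∉ Uf jstar := by
      intro hmem
      obtain ⟨v', hv', hlt⟩ := hper jstar vstar hmem
      exact absurd (hvmax (subset_closure hv')) (not_le.2 hlt)
    refine ⟨jstar, vstar, ?_, ?_⟩
    · show s ≤ fj jstar vstar
      rw [hseq]
      exact hub
    · show vstar ∈ frontier (Uf jstar)
      rw [(hUfopen jstar).frontier_eq]
      exact ⟨hvcl, hvnotU⟩
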